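/- Monotonicity of the mean majority accuracy in the (odd) ensemble size: let P_m(μ) = Σ_{k=m+1}^{2m+1} C(2m+1,k) μ^k (1−μ)^{2m+1−k} denote the majority accuracy of 2m+1 independent Bernoulli(μ) voters. If μ ∈ (1/2,1) then P_{m+1}(μ) > P_m(μ) for all m ≥ 0, and if μ ∈ (0,1/2) then P_{m+1}(μ) < P_m(μ) for all m ≥ 0. -/

import Mathlib

open Finset

/-- Majority accuracy of `2m+1` independent Bernoulli(μ) voters. -/
noncomputable def majOdd (m : ℕ) (μ : ℝ) : ℝ :=
  ∑ k ∈ Finset.Icc (m + 1) (2 * m + 1),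
    ((2 * m + 1).choose k : ℝ) * μ ^ k * (1 - μ) ^ (2 * m + 1 - k)

lemma majOdd_eq (m : ℕ) (μ : ℝ) :
    majOdd m μ = ∑ i ∈ Finset.range (m + 1),
      ((2 * m + 1).choose (m + 1 + i) : ℝ) * μ ^ (m + 1 + i) * (1 - μ) ^ (m - i) := by
  rw [majOdd, show Finset.Icc (m + 1) (2 * m + 1) = Finset.Ico (m + 1) (2 * m + 2) by
    exact (Finset.Ico_add_one_right_eq_Icc (m + 1) (2 * m + 1)).symm, Finset.sum_Ico_eq_sum_range]
  have h : 2 * m + 2 - (m + 1) = m + 1 := by omega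
  rw [h]
  refine Finset.sum_congr rfl fun i hi => ?_
  have h2 : 2 * m + 1 - (m + 1 + i) = m - i := by omega
  rw [h2]

lemma aux_sum (m : ℕ) (x y : ℝ) :
    (∑ i ∈ Finset.range (m + 1 + 1),
      ((2 * (m + 1) + 1).choose (m + 1 + 1 + i) : ℝ) * x ^ (m + 1 + 1 + i) * y ^ (m + 1 - i))
    = (∑ i ∈ Finset.range (m + 1),
        ((2 * m + 1).choose (m + 1 + i) : ℝ) * x ^ (m + 1 + i) * y ^ (m - i)) * (x + y) ^ 2
      + ((2 * m + 1).choose m : ℝ) * x ^ (m + 2) * y ^ (m + 1)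
      - ((2 * m + 1).choose (m + 1) : ℝ) * x ^ (m + 1) * y ^ (m + 2) := by
  set t : ℕ → ℝ := fun i => ((2 * m + 1).choose (m + 1 + i) : ℝ) * x ^ (m + 1 + i) * y ^ (m - i)
    with ht
  -- Pascal twice
  have pascal : ∀ i : ℕ, ((2 * (m + 1) + 1).choose (m + 1 + 1 + i) : ℝ)
      = ((2 * m + 1).choose (m + i) : ℝ) + 2 * ((2 * m + 1).choose (m + 1 + i) : ℝ)
        + ((2 * m + 1).choose (m + 2 + i) : ℝ) := by
    intro i
    have h1 : 2 * (m + 1) + 1 = (2 * m + 1) + 1 + 1 := by ring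
    have h2 : m + 1 + 1 + i = (m + i) + 1 + 1 := by ring
    rw [h1, h2, Nat.choose_succ_succ ((2*m+1)+1), Nat.choose_succ_succ (2*m+1),
      Nat.choose_succ_succ (2*m+1)]
    simp only [Nat.succ_eq_add_one]
    push_cast
    have h3 : m + i + 1 = m + 1 + i := by omega
    have h4 : m + 1 + i + 1 = m + 2 + i := by omega
    rw [h3, h4]
    ring
  have hsplit : (∑ i ∈ Finset.range (m + 1 + 1),
      ((2 * (m + 1) + 1).choose (m + 1 + 1 + i) : ℝ) * x ^ (m + 1 + 1 + i) * y ^ (m + 1 - i))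
      = (∑ i ∈ Finset.range (m + 2),
          ((2 * m + 1).choose (m + i) : ℝ) * x ^ (m + 2 + i) * y ^ (m + 1 - i))
        + (∑ i ∈ Finset.range (m + 2),
          2 * ((2 * m + 1).choose (m + 1 + i) : ℝ) * x ^ (m + 2 + i) * y ^ (m + 1 - i))
        + (∑ i ∈ Finset.range (m + 2),
          ((2 * m + 1).choose (m + 2 + i) : ℝ) * x ^ (m + 2 + i) * y ^ (m + 1 - i)) := by
    rw [← Finset.sum_add_distrib, ← Finset.sum_add_distrib]
    refine Finset.sum_congr rfl fun i hi => ?_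
    rw [pascal i]
    have h5 : m + 1 + 1 + i = m + 2 + i := by ring
    rw [h5]
    ring
  rw [hsplit]
  -- First sum: peel i = 0
  have hA : (∑ i ∈ Finset.range (m + 2),
      ((2 * m + 1).choose (m + i) : ℝ) * x ^ (m + 2 + i) * y ^ (m + 1 - i))
      = (∑ i ∈ Finset.range (m + 1), t i * x ^ 2)
        + ((2 * m + 1).choose m : ℝ) * x ^ (m + 2) * y ^ (m + 1) := by
    rw [Finset.sum_range_succ']
    simp only [Nat.add_zero, Nat.sub_zero]
    congr 1
    refine Finset.sum_congr rfl fun i hi => ?_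
    have e1 : m + (i + 1) = m + 1 + i := by ring
    have e2 : m + 2 + (i + 1) = (m + 1 + i) + 2 := by ring
    have e3 : m + 1 - (i + 1) = m - i := by omega
    rw [e1, e2, e3, ht]
    simp only [pow_add]
    ring
  -- Second sum: last term vanishes
  have hB : (∑ i ∈ Finset.range (m + 2),
      2 * ((2 * m + 1).choose (m + 1 + i) : ℝ) * x ^ (m + 2 + i) * y ^ (m + 1 - i))
      = ∑ i ∈ Finset.range (m + 1), t i * (2 * x * y) := by
    rw [Finset.sum_range_succ]
    have hz : (2 * m + 1).choose (m + 1 + (m + 1)) = 0 :=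
      Nat.choose_eq_zero_of_lt (by omega)
    rw [hz]
    simp only [Nat.cast_zero, mul_zero, zero_mul, add_zero]
    refine Finset.sum_congr rfl fun i hi => ?_
    rw [Finset.mem_range] at hi
    have e1 : m + 2 + i = (m + 1 + i) + 1 := by ring
    have e2 : m + 1 - i = (m - i) + 1 := by omega
    rw [e1, e2, ht]
    simp only [pow_succ]
    ring
  -- Third sum: last two terms vanish; equals T3 minus its first term
  have hC : (∑ i ∈ Finset.range (m + 2),
      ((2 * m + 1).choose (m + 2 + i) : ℝ) * x ^ (m + 2 + i) * y ^ (m + 1 - i))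
      = (∑ i ∈ Finset.range (m + 1), t i * y ^ 2)
        - ((2 * m + 1).choose (m + 1) : ℝ) * x ^ (m + 1) * y ^ (m + 2) := by
    rw [Finset.sum_range_succ, Finset.sum_range_succ]
    have hz1 : (2 * m + 1).choose (m + 2 + (m + 1)) = 0 :=
      Nat.choose_eq_zero_of_lt (by omega)
    have hz2 : (2 * m + 1).choose (m + 2 + m) = 0 :=
      Nat.choose_eq_zero_of_lt (by omega)
    rw [hz1, hz2]
    simp only [Nat.cast_zero, zero_mul, add_zero]
    have hT3 : (∑ i ∈ Finset.range (m + 1), t i * y ^ 2)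
        = (∑ i ∈ Finset.range m,
            ((2 * m + 1).choose (m + 2 + i) : ℝ) * x ^ (m + 2 + i) * y ^ (m + 1 - i))
          + ((2 * m + 1).choose (m + 1) : ℝ) * x ^ (m + 1) * y ^ (m + 2) := by
      rw [Finset.sum_range_succ']
      congr 1
      · refine Finset.sum_congr rfl fun i hi => ?_
        rw [Finset.mem_range] at hi
        simp only [ht]
        have e1 : m + 1 + (i + 1) = m + 2 + i := by ring
        have e2 : m + 1 - i = (m - (i + 1)) + 2 := by omega
        rw [e1, e2]
        simp only [pow_add]
        ring
      · simp only [ht, Nat.add_zero, Nat.sub_zero]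
        have : y ^ m * y ^ 2 = y ^ (m + 2) := by rw [← pow_add]
        calc ((2 * m + 1).choose (m + 1) : ℝ) * x ^ (m + 1) * y ^ m * y ^ 2
            = ((2 * m + 1).choose (m + 1) : ℝ) * x ^ (m + 1) * (y ^ m * y ^ 2) := by ring
          _ = ((2 * m + 1).choose (m + 1) : ℝ) * x ^ (m + 1) * y ^ (m + 2) := by rw [this]
    rw [hT3]
    ring
  rw [hA, hB, hC, Finset.sum_mul]
  have hexp : (∑ i ∈ Finset.range (m + 1),
        ((2 * m + 1).choose (m + 1 + i) : ℝ) * x ^ (m + 1 + i) * y ^ (m - i) * (x + y) ^ 2)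
      = (∑ i ∈ Finset.range (m + 1), t i * x ^ 2)
        + (∑ i ∈ Finset.range (m + 1), t i * (2 * x * y))
        + (∑ i ∈ Finset.range (m + 1), t i * y ^ 2) := by
    rw [← Finset.sum_add_distrib, ← Finset.sum_add_distrib]
    refine Finset.sum_congr rfl fun i _ => by simp only [ht]; ring
  rw [hexp]
  ring

lemma majOdd_key (m : ℕ) (μ : ℝ) :
    majOdd (m + 1) μ - majOdd m μ
      = ((2 * m + 1).choose m : ℝ) * (μ * (1 - μ)) ^ (m + 1) * (2 * μ - 1) := by
  rw [majOdd_eq (m + 1) μ, majOdd_eq m μ, aux_sum m μ (1 - μ)]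
  have hsym : ((2 * m + 1).choose (m + 1) : ℝ) = ((2 * m + 1).choose m : ℝ) := by
    norm_cast
    rw [← Nat.choose_symm (show m ≤ 2 * m + 1 by omega)]
    congr 1
    omega
  rw [hsym]
  have h1 : (μ + (1 - μ)) = 1 := by ring
  rw [h1]
  have h2 : (μ * (1 - μ)) ^ (m + 1) = μ ^ (m + 1) * (1 - μ) ^ (m + 1) := mul_pow _ _ _
  rw [h2]
  simp only [pow_succ, pow_add]
  ring

/-- Monotonicity of the mean majority accuracy in the (odd) ensemble size:
if `μ ∈ (1/2,1)` then `P_{m+1}(μ) > P_m(μ)`; if `μ ∈ (0,1/2)` then `P_{m+1}(μ) < P_m(μ)`. -/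
theorem majOdd_monotone (μ : ℝ) :
    (μ ∈ Set.Ioo (1/2 : ℝ) 1 → ∀ m : ℕ, majOdd m μ < majOdd (m + 1) μ) ∧
    (μ ∈ Set.Ioo (0 : ℝ) (1/2) → ∀ m : ℕ, majOdd (m + 1) μ < majOdd m μ) := by
  constructor
  · rintro ⟨h1, h2⟩ m
    have hk := majOdd_key m μ
    have hc : 0 < ((2 * m + 1).choose m : ℝ) := by
      exact_mod_cast Nat.choose_pos (by omega : m ≤ 2 * m + 1)
    have hμ : 0 < μ * (1 - μ) := mul_pos (by linarith) (by linarith)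
    have hp : 0 < (μ * (1 - μ)) ^ (m + 1) := pow_pos hμ _
    have hs : 0 < 2 * μ - 1 := by linarith
    nlinarith [mul_pos (mul_pos hc hp) hs]
  · rintro ⟨h1, h2⟩ m
    have hk := majOdd_key m μ
    have hc : 0 < ((2 * m + 1).choose m : ℝ) := by
      exact_mod_cast Nat.choose_pos (by omega : m ≤ 2 * m + 1)
    have hμ : 0 < μ * (1 - μ) := mul_pos (by linarith) (by linarith)
    have hp : 0 < (μ * (1 - μ)) ^ (m + 1) := pow_pos hμ _
    have hs : 2 * μ - 1 < 0 := by linarith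
    nlinarith [mul_neg_of_pos_of_neg (mul_pos hc hp) hs]
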